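/- Ontic indifference preserves overlap: let ν and μ be probability measures on a measurable space (Λ, Σ) with variational distance D(μ, ν) < 1, let n ≥ 1, and let (γ_j)_{j ∈ Fin n} be Markov kernels from (Λ, Σ) to itself such that for each j there is a measurable set Ω_j with ν(Ω_j) = 1 and, for every λ ∈ Ω_j and every measurable Ω' ⊆ Ω_j, γ_j(λ)(Ω') = δ_λ(Ω') (the Dirac measure at λ). Let μ_j := μ bind γ_j. Then the overlap L({μ_j}_{j ∈ Fin n}) > 0. -/

import Mathlib

open MeasureTheory ProbabilityTheory

/-- The variational distance between two measures: the supremum over measurable sets of the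
absolute difference of their (real-valued) measures. -/
noncomputable def varDist {Λ : Type*} [MeasurableSpace Λ] (μ ν : Measure Λ) : ℝ :=
  ⨆ Ω : {s : Set Λ // MeasurableSet s}, |(μ Ω.1).toReal - (ν Ω.1).toReal|

/-- The overlap of a finite family of measures: the infimum, over all measurable partitions
`(Ω i)` of the space, of `∑ i, μ i (Ω i)`. -/
noncomputable def familyOverlap {Λ : Type*} [MeasurableSpace Λ] {ι : Type*} [Fintype ι]
    (μ : ι → Measure Λ) : ℝ :=
  ⨅ P : {P : ι → Set Λ // (∀ i, MeasurableSet (P i)) ∧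
      Pairwise (Function.onFun Disjoint P) ∧ (⋃ i, P i) = Set.univ},
    ∑ i, (μ i (P.1 i)).toReal

/-- Ontic indifference preserves overlap: if `D(μ, ν) < 1` and each Markov kernel `γ j` acts
as the identity (Dirac) kernel on a `ν`-measure-one set, then the family of transformed
measures `μ bind γ j` has strictly positive overlap. -/
theorem stmt13 {Λ : Type*} [MeasurableSpace Λ]
    (μ ν : Measure Λ) [IsProbabilityMeasure μ] [IsProbabilityMeasure ν]
    (hD : varDist μ ν < 1)
    (n : ℕ) (hn : 1 ≤ n)
    (γ : Fin n → Kernel Λ Λ) [∀ j, IsMarkovKernel (γ j)]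
    (hOI : ∀ j, ∃ Ω : Set Λ, MeasurableSet Ω ∧ ν Ω = 1 ∧
      ∀ l ∈ Ω, ∀ Ω' : Set Λ, Ω' ⊆ Ω → MeasurableSet Ω' →
        γ j l Ω' = Measure.dirac l Ω') :
    0 < familyOverlap (fun j => μ.bind fun l => γ j l) := by
  classical
  choose Ω hΩm hΩν hΩact using hOI
  set S : Set Λ := ⋂ j, Ω j with hS
  have hSm : MeasurableSet S := MeasurableSet.iInter fun j => hΩm j
  -- ν S = 1
  have hScompl : ν Sᶜ = 0 := by
    rw [hS, Set.compl_iInter]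
    refine measure_iUnion_null fun j => ?_
    rw [measure_compl (hΩm j) (measure_ne_top ν _), hΩν j, measure_univ]
    simp
  have hνS : ν S = 1 := by
    have := measure_compl hSm (measure_ne_top ν S)
    rw [hScompl, measure_univ] at this
    have h1 : ν S ≤ 1 := prob_le_one
    have : (1 : ENNReal) - ν S = 0 := this.symm
    exact le_antisymm h1 (by simpa using tsub_eq_zero_iff_le.mp this)
  -- μ S > 0
  have hbdd : BddAbove (Set.range fun Ωs : {s : Set Λ // MeasurableSet s} =>
      |(μ Ωs.1).toReal - (ν Ωs.1).toReal|) := by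
    refine ⟨2, fun x hx => ?_⟩
    obtain ⟨Ωs, rfl⟩ := hx
    have h1 : (μ Ωs.1).toReal ≤ 1 := by
      simpa using ENNReal.toReal_mono ENNReal.one_ne_top (prob_le_one (μ := μ) (s := Ωs.1))
    have h2 : (ν Ωs.1).toReal ≤ 1 := by
      simpa using ENNReal.toReal_mono ENNReal.one_ne_top (prob_le_one (μ := ν) (s := Ωs.1))
    have h3 : 0 ≤ (μ Ωs.1).toReal := ENNReal.toReal_nonneg
    have h4 : 0 ≤ (ν Ωs.1).toReal := ENNReal.toReal_nonneg
    rw [abs_sub_le_iff]; constructor <;> linarith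
  have hle : |(μ S).toReal - (ν S).toReal| ≤ varDist μ ν :=
    le_ciSup hbdd ⟨S, hSm⟩
  have hμS : 0 < (μ S).toReal := by
    rw [hνS] at hle
    simp only [ENNReal.toReal_one] at hle
    have := lt_of_le_of_lt hle hD
    rw [abs_sub_lt_iff] at this
    linarith [this.2]
  -- the partition type is nonempty
  have hne : Nonempty {P : Fin n → Set Λ // (∀ i, MeasurableSet (P i)) ∧
      Pairwise (Function.onFun Disjoint P) ∧ (⋃ i, P i) = Set.univ} := by
    have h0 : (0 : ℕ) < n := hn
    refine ⟨⟨fun j => if j = ⟨0, h0⟩ then Set.univ else ∅, fun i => ?_, ?_, ?_⟩⟩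
    · by_cases h : i = ⟨0, h0⟩ <;> simp [h]
    · intro i j hij
      by_cases hi : i = ⟨0, h0⟩
      · have hj : j ≠ ⟨0, h0⟩ := by rw [hi] at hij; exact hij.symm
        simp [Function.onFun, hi, hj]
      · simp [Function.onFun, hi]
    · apply Set.eq_univ_of_univ_subset
      intro x _
      exact Set.mem_iUnion.2 ⟨⟨0, h0⟩, by simp⟩
  -- key bound: every partition sum is at least (μ S).toReal
  refine lt_of_lt_of_le hμS (le_ciInf fun P => ?_)
  obtain ⟨P, hPm, hPd, hPu⟩ := P
  -- bind value on each piece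
  have hbind : ∀ j, μ (P j ∩ S) ≤ (μ.bind fun l => γ j l) (P j) := by
    intro j
    rw [Measure.bind_apply (hPm j) (Kernel.measurable (γ j)).aemeasurable]
    calc μ (P j ∩ S) = ∫⁻ l in S, Set.indicator (P j ∩ S) (fun _ => 1) l ∂μ := by
          rw [setLIntegral_indicator ((hPm j).inter hSm)]
          simp [Set.inter_assoc]
      _ = ∫⁻ l in S, γ j l (P j ∩ S) ∂μ := by
          refine setLIntegral_congr_fun hSm (fun l hl => ?_)
          have hlj : l ∈ Ω j := Set.mem_iInter.mp hl j
          have hsub : P j ∩ S ⊆ Ω j := fun x hx => Set.mem_iInter.mp hx.2 j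
          rw [hΩact j l hlj (P j ∩ S) hsub ((hPm j).inter hSm),
            Measure.dirac_apply' l ((hPm j).inter hSm)]
          rfl
      _ ≤ ∫⁻ l in S, γ j l (P j) ∂μ := by
          refine setLIntegral_mono ((Kernel.measurable_coe _ (hPm j))) fun l => ?_
          exact fun _ => measure_mono Set.inter_subset_left
      _ ≤ ∫⁻ l, γ j l (P j) ∂μ := setLIntegral_le_lintegral _ _
  -- sum of pieces covers S
  have hsum : μ S ≤ ∑ j, (μ.bind fun l => γ j l) (P j) := by
    calc μ S = μ (⋃ j, P j ∩ S) := by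
          rw [← Set.iUnion_inter, hPu, Set.univ_inter]
      _ ≤ ∑ j, μ (P j ∩ S) := measure_iUnion_fintype_le _ _
      _ ≤ ∑ j, (μ.bind fun l => γ j l) (P j) := Finset.sum_le_sum fun j _ => hbind j
  -- finiteness of each bind value
  have hfin : ∀ j, (μ.bind fun l => γ j l) (P j) ≤ 1 := by
    intro j
    rw [Measure.bind_apply (hPm j) (Kernel.measurable (γ j)).aemeasurable]
    calc ∫⁻ l, γ j l (P j) ∂μ ≤ ∫⁻ _, 1 ∂μ :=
          lintegral_mono fun l => prob_le_one
      _ = 1 := by simp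
  have hsumfin : (∑ j, (μ.bind fun l => γ j l) (P j)) ≠ ⊤ := by
    refine (lt_of_le_of_lt (Finset.sum_le_sum fun j _ => hfin j) ?_).ne
    simp [ENNReal.sum_lt_top]
  calc (μ S).toReal ≤ (∑ j, (μ.bind fun l => γ j l) (P j)).toReal :=
        ENNReal.toReal_mono hsumfin hsum
    _ = ∑ j, ((μ.bind fun l => γ j l) (P j)).toReal :=
        ENNReal.toReal_sum fun j _ => (lt_of_le_of_lt (hfin j) ENNReal.one_lt_top).ne
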